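/- Let f, g, c_p > 0 and Π₀ ∈ ℝ, and let c(x, y) = (f²/(2y₂))(x₁ − y₁)² + g x₂/y₂ − c_p Π₀ for x ∈ ℝ² and y ∈ ℝ² with y₂ > 0. Fix y ∈ ℝ² with y₂ > 0 and define Φ(·; y) : ℝ² → ℝ² by Φ(p; y) = ((y₂/f²) p₁ + y₁, (y₂²/g)(p₂ − p₁²/(2f²))). Then (i) Φ(·; y) is a bijection of ℝ² onto ℝ², and (ii) for every p ∈ ℝ², −∇_y c(Φ(p; y), y) = p, where ∇_y denotes the gradient of c(x, y) with respect to its second argument; i.e., Φ(·; y) is the inverse of the map x ↦ −D_y c(x, y). -/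
import Mathlib


/-- The `c`-exponential map `Φ(·;y)` is a bijection of `ℝ²` and is the inverse of
`x ↦ −D_y c(x, y)`: for every `p`, `−∇_y c(Φ(p;y), y) = p`, where the gradient is
taken with respect to the second argument of `c`. -/
theorem stmt_8
    (f g c_p Pr₀ : ℝ) (hf : 0 < f) (hg : 0 < g) (hcp : 0 < c_p)
    (c : (ℝ × ℝ) → (ℝ × ℝ) → ℝ)
    (hc : ∀ x y : ℝ × ℝ,
      c x y = f ^ 2 / (2 * y.2) * (x.1 - y.1) ^ 2 + g * x.2 / y.2 - c_p * Pr₀)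
    (y : ℝ × ℝ) (hy : 0 < y.2)
    (Φ : (ℝ × ℝ) → ℝ × ℝ)
    (hΦ : ∀ p : ℝ × ℝ,
      Φ p = (y.2 / f ^ 2 * p.1 + y.1, y.2 ^ 2 / g * (p.2 - p.1 ^ 2 / (2 * f ^ 2)))) :
    Function.Bijective Φ ∧
    ∀ p : ℝ × ℝ,
      (-(deriv (fun t => c (Φ p) (t, y.2)) y.1),
       -(deriv (fun t => c (Φ p) (y.1, t)) y.2)) = p := by
  have hf2 : (f : ℝ) ^ 2 ≠ 0 := by positivity
  have hy2 : y.2 ≠ 0 := ne_of_gt hy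
  have hg' : g ≠ 0 := ne_of_gt hg
  constructor
  · rw [Function.bijective_iff_has_inverse]
    refine ⟨fun q => (f ^ 2 / y.2 * (q.1 - y.1),
      g / y.2 ^ 2 * q.2 + (f ^ 2 / y.2 * (q.1 - y.1)) ^ 2 / (2 * f ^ 2)), ?_, ?_⟩
    · intro p
      simp only [hΦ]
      refine Prod.ext ?_ ?_ <;> simp <;> field_simp <;> ring
    · intro q
      simp only [hΦ]
      refine Prod.ext ?_ ?_ <;> simp <;> field_simp <;> ring
  · intro p
    have h1 : HasDerivAt (fun t => c (Φ p) (t, y.2))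
        (f ^ 2 / (2 * y.2) * (2 * ((Φ p).1 - y.1) ^ 1 * (-1))) y.1 := by
      have key : (fun t => c (Φ p) (t, y.2)) =
          fun t => f ^ 2 / (2 * y.2) * ((Φ p).1 - t) ^ 2 + g * (Φ p).2 / y.2 - c_p * Pr₀ := by
        funext t; rw [hc]
      rw [key]
      exact ((((hasDerivAt_id y.1).const_sub ((Φ p).1)).pow 2).const_mul
        (f ^ 2 / (2 * y.2))).add_const _ |>.sub_const _
    have h2 : HasDerivAt (fun t => c (Φ p) (y.1, t))
        (f ^ 2 * ((Φ p).1 - y.1) ^ 2 / 2 * (-(y.2 ^ 2)⁻¹)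
          + g * (Φ p).2 * (-(y.2 ^ 2)⁻¹)) y.2 := by
      have key : (fun t => c (Φ p) (y.1, t)) =
          fun t => f ^ 2 * ((Φ p).1 - y.1) ^ 2 / 2 * t⁻¹ + g * (Φ p).2 * t⁻¹ - c_p * Pr₀ := by
        funext t; rw [hc]; ring
      rw [key]
      exact (((hasDerivAt_inv hy2).const_mul _).add
        ((hasDerivAt_inv hy2).const_mul _)).sub_const _
    rw [h1.deriv, h2.deriv, hΦ]
    refine Prod.ext ?_ ?_ <;> simp <;> field_simp <;> ring
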